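/- Let k be a field and let p, q ∈ k be algebraically independent over the prime subfield of k. Let σ be the automorphism of ℙ² given by σ(a : b : c) = (pa : qb : c) and let c = (1 : 1 : 1) ∈ ℙ². Then the orbit 𝒞 = {σ^{−i}(c) : i ∈ ℕ} = {(p^{−i} : q^{−i} : 1) : i ∈ ℕ} is critically dense in ℙ²: every infinite subset of 𝒞 is Zariski dense in ℙ². Equivalently, if f ∈ k[x₀, x₁, x₂] is a homogeneous polynomial such that f(p^{−i}, q^{−i}, 1) = 0 for infinitely many i ∈ ℕ, then f = 0. -/

import Mathlib

lemma stmt9_pow_aux {k : Type} [Field k] (x : k) (hx : x ≠ 0) {a d : ℕ} (had : a ≤ d) (i : ℕ) :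
    (x⁻¹ ^ i) ^ a * x ^ (d * i) = x ^ ((d - a) * i) := by
  have h1 : d * i = a * i + (d - a) * i := by rw [← Nat.add_mul]; congr 1; omega
  rw [← pow_mul, inv_pow, mul_comm i a, h1, pow_add, ← mul_assoc,
    inv_mul_cancel₀ (pow_ne_zero _ hx), one_mul]

lemma stmt9_key_inj {K m n m' n' : ℕ} (hn : n < K) (hn' : n' < K)
    (h : m * K + n = m' * K + n') : m = m' ∧ n = n' := by
  have hmm : ∀ a b c c' : ℕ, c < K → a < b → a * K + c < b * K + c' := by
    intro a b c c' hc hab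
    calc a * K + c < a * K + K := by omega
    _ = (a + 1) * K := by ring
    _ ≤ b * K := Nat.mul_le_mul_right K hab
    _ ≤ b * K + c' := Nat.le_add_right _ _
  have hm : m = m' := by
    rcases Nat.lt_trichotomy m m' with h1 | h1 | h1
    · exact absurd h (Nat.ne_of_lt (hmm _ _ _ _ hn h1))
    · exact h1
    · exact absurd h.symm (Nat.ne_of_lt (hmm _ _ _ _ hn' h1))
  subst hm
  exact ⟨rfl, Nat.add_left_cancel h⟩


lemma stmt9_det_coeff {F : Type*} [Field F] {n : ℕ} (W Inat : Fin n → ℕ)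
    (hW : StrictMono W) (hI : StrictMono Inat) :
    (Matrix.det (Matrix.of fun j l => (Polynomial.X : Polynomial F) ^ (W j * Inat l))).coeff
      (∑ j, W j * Inat j) = 1 := by
  classical
  rw [Matrix.det_apply, Polynomial.finset_sum_coeff,
    Finset.sum_eq_single (1 : Equiv.Perm (Fin n))]
  · simp only [Equiv.Perm.sign_one, one_smul, Equiv.Perm.one_apply, Matrix.of_apply]
    rw [Finset.prod_pow_eq_pow_sum, Polynomial.coeff_X_pow, if_pos rfl]
  · intro π _ hπ
    have hlt : ∑ j, W (π j) * Inat j < ∑ j, W j * Inat j := by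
      have hmono : Monovary W Inat := fun a b h => hW.monotone (hI.lt_iff_lt.mp h).le
      refine hmono.sum_comp_perm_mul_lt_sum_mul_iff.mpr ?_
      intro hcon
      apply hπ
      have hsm : StrictMono ⇑π := by
        intro a b hab
        have h3 : W (π a) ≤ W (π b) := hcon (hI hab)
        have h4 : π a ≤ π b := hW.le_iff_le.mp h3
        exact lt_of_le_of_ne h4 (fun h5 => (ne_of_lt hab) (π.injective h5))
      haveI : WellFoundedLT (Fin n) := inferInstance
      have h6 : ⇑π = id := (hsm.range_inj strictMono_id).mp
        (by rw [Set.range_id, Equiv.range_eq_univ])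
      exact Equiv.ext (fun x => congrFun h6 x)
    rw [Polynomial.coeff_smul]
    simp only [Matrix.of_apply]
    rw [Finset.prod_pow_eq_pow_sum, Polynomial.coeff_X_pow,
      if_neg (Ne.symm (Nat.ne_of_lt hlt)), smul_zero]
  · intro h; exact absurd (Finset.mem_univ _) h


/-- Let `k` be a field and `p, q ∈ k` algebraically independent over
the prime subfield (the smallest subfield `⊥ : Subfield k`). Then the orbit
`𝒞 = {(p⁻ⁱ : q⁻ⁱ : 1) : i ∈ ℕ}` of `(1 : 1 : 1)` under `σ⁻¹`, where
`σ(a : b : c) = (pa : qb : c)`, is critically dense in `ℙ²`: any homogeneous polynomial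
`f ∈ k[x₀, x₁, x₂]` vanishing at `(p⁻ⁱ, q⁻ⁱ, 1)` for infinitely many `i ∈ ℕ` is zero
(equivalently, every infinite subset of `𝒞` is Zariski dense in `ℙ²`). -/
theorem stmt9 (k : Type) [Field k] (p q : k)
    (hind : AlgebraicIndependent (⊥ : Subfield k) ![p, q])
    (d : ℕ) (f : MvPolynomial (Fin 3) k) (hf : f.IsHomogeneous d)
    (hvan : {i : ℕ | MvPolynomial.eval ![p⁻¹ ^ i, q⁻¹ ^ i, 1] f = 0}.Infinite) :
    f = 0 := by
  classical
  by_contra hf0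
  set F := (⊥ : Subfield k) with hF
  have hinj : Function.Injective ⇑(MvPolynomial.aeval (R := F) ![p, q]) := hind
  have hp : p ≠ 0 := by simpa using hind.ne_zero 0
  have hq : q ≠ 0 := by simpa using hind.ne_zero 1
  -- support facts
  have hdeg : ∀ ν ∈ f.support, ν 0 + ν 1 + ν 2 = d := by
    intro ν hν
    have h := hf (MvPolynomial.mem_support_iff.mp hν)
    rw [Finsupp.weight_apply, Finsupp.sum_fintype] at h
    · simpa [Fin.sum_univ_three] using h
    · intro i; simp
  set s := f.support with hs
  have hsne : s.Nonempty := Finset.nonempty_iff_ne_empty.mpr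
    (fun h => hf0 (MvPolynomial.support_eq_empty.mp h))
  set n := s.card with hn
  have hnpos : 0 < n := Finset.card_pos.mpr hsne
  set K := d + 1 with hK
  have hle : ∀ ν ∈ s, ν 0 ≤ d ∧ ν 1 ≤ d := by
    intro ν hν; have := hdeg ν hν; omega
  set κ : (Fin 3 →₀ ℕ) → ℕ := fun ν => (d - ν 0) * K + (d - ν 1) with hκ
  have hκinj : Set.InjOn κ s := by
    intro ν hν ν' hν' h
    have h0 := hdeg ν hν; have h0' := hdeg ν' hν'
    obtain ⟨h1, h2⟩ := stmt9_key_inj (K := K) (by omega) (by omega) h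
    have e0 : ν 0 = ν' 0 := by omega
    have e1 : ν 1 = ν' 1 := by omega
    have e2 : ν 2 = ν' 2 := by omega
    ext r
    fin_cases r
    · exact e0
    · exact e1
    · exact e2
  set T := s.image κ with hT
  have hTcard : T.card = n := by rw [hT, Finset.card_image_of_injOn hκinj]
  set e := T.orderIsoOfFin hTcard with he
  have hgex : ∀ j : Fin n, ∃ ν, ν ∈ s ∧ κ ν = (e j : ℕ) := by
    intro j
    have h2 := (e j).2
    exact Finset.mem_image.mp h2
  choose g hgs hgκ using hgex
  have hκg : StrictMono fun j => κ (g j) := by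
    intro a b hab
    show κ (g a) < κ (g b)
    rw [hgκ a, hgκ b]
    exact_mod_cast e.strictMono hab
  have hginj : Function.Injective g := by
    intro a b h
    exact hκg.injective (by simp only [h])
  have hgimg : Finset.image g Finset.univ = s := by
    apply Finset.eq_of_subset_of_card_le
    · intro x hx
      rcases Finset.mem_image.mp hx with ⟨j, _, rfl⟩
      exact hgs j
    · rw [Finset.card_image_of_injective _ hginj, Finset.card_univ, Fintype.card_fin]
  -- choose the i's
  obtain ⟨t, htS, htcard⟩ := hvan.exists_subset_card_eq n
  set I := t.orderIsoOfFin htcard with hI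
  set Inat : Fin n → ℕ := fun l => (I l : ℕ) with hInat
  have hImono : StrictMono Inat := fun a b hab => by
    exact_mod_cast I.strictMono hab
  have hIS : ∀ l, MvPolynomial.eval ![p⁻¹ ^ Inat l, q⁻¹ ^ Inat l, 1] f = 0 := by
    intro l
    exact htS (I l).2
  -- the k-valued matrix and the linear relation
  set c : Fin n → k := fun j => f.coeff (g j) with hc
  have hc0 : ∀ j, c j ≠ 0 := fun j => MvPolynomial.mem_support_iff.mp (hgs j)
  set M : Matrix (Fin n) (Fin n) k := fun j l =>
    p ^ ((d - g j 0) * Inat l) * q ^ ((d - g j 1) * Inat l) with hM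
  have hrow : ∀ l, ∑ j, c j * M j l = 0 := by
    intro l
    have h0 := hIS l
    rw [MvPolynomial.eval_eq'] at h0
    have h1 : (∑ ν ∈ f.support, f.coeff ν *
        ∏ i, (![p⁻¹ ^ Inat l, q⁻¹ ^ Inat l, 1] i) ^ ν i) *
        (p ^ (d * Inat l) * q ^ (d * Inat l)) = 0 := by rw [h0, zero_mul]
    rw [Finset.sum_mul] at h1
    have h2 : ∑ ν ∈ f.support, f.coeff ν *
        (p ^ ((d - ν 0) * Inat l) * q ^ ((d - ν 1) * Inat l)) = 0 := by
      rw [← h1]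
      apply Finset.sum_congr rfl
      intro ν hν
      have ha := (hle ν hν).1
      have hb := (hle ν hν).2
      have e1 := stmt9_pow_aux p hp ha (Inat l)
      have e2 := stmt9_pow_aux q hq hb (Inat l)
      rw [Fin.prod_univ_three]
      simp only [Matrix.cons_val_zero, Matrix.cons_val_one, Matrix.head_cons,
        Matrix.cons_val_two, Matrix.tail_cons, one_pow, mul_one]
      calc f.coeff ν * (p ^ ((d - ν 0) * Inat l) * q ^ ((d - ν 1) * Inat l))
          = f.coeff ν * (((p⁻¹ ^ Inat l) ^ ν 0 * p ^ (d * Inat l)) *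
            ((q⁻¹ ^ Inat l) ^ ν 1 * q ^ (d * Inat l))) := by rw [e1, e2]
        _ = f.coeff ν * ((p⁻¹ ^ Inat l) ^ ν 0 * (q⁻¹ ^ Inat l) ^ ν 1) *
            (p ^ (d * Inat l) * q ^ (d * Inat l)) := by ring
    have h3 : ∑ ν ∈ Finset.image g Finset.univ, MvPolynomial.coeff ν f *
        (p ^ ((d - ν 0) * Inat l) * q ^ ((d - ν 1) * Inat l)) = 0 := by
      rw [hgimg]; exact h2
    rw [Finset.sum_image (fun a _ b _ h => hginj h)] at h3
    exact h3
  have hMdet : M.det = 0 := by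
    by_contra hdet
    have hvm : Matrix.vecMul c M = 0 := by
      funext l
      simpa [Matrix.vecMul, dotProduct] using hrow l
    have := Matrix.eq_zero_of_vecMul_eq_zero hdet hvm
    exact hc0 ⟨0, hnpos⟩ (congrFun this ⟨0, hnpos⟩)
  -- transfer to polynomials over the prime subfield
  set D : Matrix (Fin n) (Fin n) (MvPolynomial (Fin 2) F) := fun j l =>
    (MvPolynomial.X 0) ^ ((d - g j 0) * Inat l) * (MvPolynomial.X 1) ^ ((d - g j 1) * Inat l)
    with hD
  have hMD : M = D.map (MvPolynomial.aeval (R := F) ![p, q]) := by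
    ext j l
    show M j l = MvPolynomial.aeval (R := F) ![p, q] (D j l)
    simp [hD, hM, Matrix.map_apply]
  have hDdet : D.det = 0 := by
    apply hinj
    rw [map_zero]
    rw [AlgHom.map_det, AlgHom.mapMatrix_apply, ← hMD, hMdet]
  -- collapse to one variable
  set ψ : MvPolynomial (Fin 2) F →ₐ[F] Polynomial F :=
    MvPolynomial.aeval ![Polynomial.X ^ K, Polynomial.X] with hψ
  set W : Fin n → ℕ := fun j => κ (g j) with hW
  set N : Matrix (Fin n) (Fin n) (Polynomial F) := Matrix.of fun j l =>
    Polynomial.X ^ (W j * Inat l) with hN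
  have hDN : D.map ψ = N := by
    apply Matrix.ext
    intro j l
    show ψ (D j l) = N j l
    simp only [hD, hN, Matrix.map_apply, Matrix.of_apply, map_mul, map_pow,
      MvPolynomial.aeval_X, hψ, Matrix.cons_val_zero, Matrix.cons_val_one, Matrix.head_cons]
    rw [← pow_mul, ← pow_add]
    congr 1
    show K * ((d - g j 0) * Inat l) + (d - g j 1) * Inat l = κ (g j) * Inat l
    simp only [hκ]
    ring
  have hNdet0 : N.det = 0 := by
    rw [← hDN, ← AlgHom.mapMatrix_apply, ← AlgHom.map_det, hDdet, map_zero]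
  -- but N.det has a nonzero coefficient
  have hWmono : StrictMono W := hκg
  have hcoeffE := stmt9_det_coeff (F := F) W Inat hWmono hImono
  rw [← hN, hNdet0, Polynomial.coeff_zero] at hcoeffE
  exact one_ne_zero hcoeffE.symm
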